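/- Let G be a finite group acting linearly on a finite-dimensional real vector space V, and let k ≥ 2. Then the dimension of the real vector space of linear maps L : V^k → V^k that are equivariant under both the componentwise G^k-action and the S_k coordinate-permutation action equals D + s², where D is the dimension of the space of G-equivariant linear maps V → V and s = dim{v ∈ V : g·v = v for all g ∈ G}. -/

import Mathlib

namespace WreathDimCount

variable {G V : Type*} [Group G] [AddCommGroup V] [Module ℝ V]

/-- The space of `G`-equivariant linear endomorphisms of `V`. -/
def GEquivMaps (ρ : Representation ℝ G V) : Submodule ℝ (V →ₗ[ℝ] V) where
  carrier := {T | ∀ (g : G) (v : V), T (ρ g v) = ρ g (T v)}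
  zero_mem' := by intro g v; simp
  add_mem' := by
    intro T T' hT hT' g v
    simp [LinearMap.add_apply, hT g v, hT' g v]
  smul_mem' := by
    intro c T hT g v
    simp [LinearMap.smul_apply, hT g v]

/-- The space of wreath-equivariant linear endomorphisms of `Vᵏ`, i.e. those
commuting with the componentwise `Gᵏ`-action and with coordinate permutations. -/
def WreathEquivMaps (ρ : Representation ℝ G V) (k : ℕ) :
    Submodule ℝ ((Fin k → V) →ₗ[ℝ] (Fin k → V)) where
  carrier := {L |
    (∀ (g : Fin k → G) (v : Fin k → V),
      L (fun i => ρ (g i) (v i)) = fun i => ρ (g i) (L v i)) ∧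
    (∀ (τ : Equiv.Perm (Fin k)) (v : Fin k → V),
      L (fun i => v (τ⁻¹ i)) = fun i => L v (τ⁻¹ i))}
  zero_mem' := by
    constructor
    · intro g v; funext m; simp
    · intro τ v; funext m; simp
  add_mem' := by
    rintro L L' ⟨hL1, hL2⟩ ⟨hL'1, hL'2⟩
    constructor
    · intro g v
      funext m
      simp [LinearMap.add_apply, hL1 g v, hL'1 g v]
    · intro τ v
      funext m
      simp only [LinearMap.add_apply, Pi.add_apply, hL2 τ v, hL'2 τ v]
  smul_mem' := by
    rintro c L ⟨hL1, hL2⟩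
    constructor
    · intro g v
      funext m
      simp [LinearMap.smul_apply, hL1 g v]
    · intro τ v
      funext m
      simp only [LinearMap.smul_apply, Pi.smul_apply, hL2 τ v]

/-- Maps `B` with `B (ρ g v) = ρ h (B v)` for all `g h`. -/
def BMaps (ρ : Representation ℝ G V) : Submodule ℝ (V →ₗ[ℝ] V) where
  carrier := {B | ∀ (g h : G) (v : V), B (ρ g v) = ρ h (B v)}
  zero_mem' := by intro g h v; simp
  add_mem' := by intro B B' hB hB' g h v; simp [hB g h v, hB' g h v]
  smul_mem' := by intro c B hB g h v; simp [hB g h v]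

theorem BMaps_factor {ρ : Representation ℝ G V} {B : V →ₗ[ℝ] V} (hB : B ∈ BMaps ρ)
    (g : G) (v : V) : B (ρ g v) = B v := by
  simpa using hB g 1 v

theorem BMaps_inv {ρ : Representation ℝ G V} {B : V →ₗ[ℝ] V} (hB : B ∈ BMaps ρ)
    (h : G) (v : V) : ρ h (B v) = B v := by
  simpa using (hB 1 h v).symm

section Avg
variable [Fintype G] [Invertible (Fintype.card G : ℝ)] (ρ : Representation ℝ G V)

/-- Averaging projection onto invariants. -/
noncomputable def πinv : V →ₗ[ℝ] ρ.invariants :=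
  (Representation.averageMap ρ).codRestrict ρ.invariants (Representation.averageMap_invariant ρ)

theorem πinv_apply_invariant (w : ρ.invariants) : πinv ρ (w : V) = w := by
  ext
  rw [πinv, LinearMap.codRestrict_apply]
  exact Representation.averageMap_id ρ _ w.2

theorem averageMap_comm (g : G) (v : V) :
    Representation.averageMap ρ (ρ g v) = Representation.averageMap ρ v := by
  have h1 : ρ g v = Representation.asAlgebraHom ρ (MonoidAlgebra.single g (1 : ℝ)) v := by
    simp [Representation.asAlgebraHom_single_one]
  rw [Representation.averageMap, h1, ← Module.End.mul_apply, ← map_mul,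
    GroupAlgebra.mul_average_right]

theorem BMaps_avg {B : V →ₗ[ℝ] V} (hB : B ∈ BMaps ρ) (v : V) :
    B (Representation.averageMap ρ v) = B v := by
  classical
  have hcard : (Fintype.card G : ℝ) ≠ 0 := by
    simp [Fintype.card_ne_zero]
  have : Representation.averageMap ρ v = ⅟(Fintype.card G : ℝ) • ∑ g : G, ρ g v := by
    simp only [Representation.averageMap, GroupAlgebra.average, map_smul, map_sum,
      LinearMap.smul_apply, LinearMap.sum_apply]
    congr 1
    refine Finset.sum_congr rfl fun g _ => ?_
    simp [Representation.asAlgebraHom_single_one]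
  rw [this, map_smul, map_sum]
  have : ∀ g : G, B (ρ g v) = B v := fun g => BMaps_factor hB g v
  simp only [this, Finset.sum_const, Finset.card_univ, smul_smul, ← Nat.cast_smul_eq_nsmul ℝ]
  rw [invOf_mul_self]
  simp

/-- `BMaps` is isomorphic to endomorphisms of the invariants. -/
noncomputable def bMapsEquiv : BMaps ρ ≃ₗ[ℝ] (ρ.invariants →ₗ[ℝ] ρ.invariants) where
  toFun B := (πinv ρ) ∘ₗ (B : V →ₗ[ℝ] V) ∘ₗ ρ.invariants.subtype
  map_add' B B' := by ext w; simp
  map_smul' c B := by ext w; simp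
  invFun T := ⟨ρ.invariants.subtype ∘ₗ T ∘ₗ πinv ρ, by
    intro g h v
    have h1 : πinv ρ (ρ g v) = πinv ρ v := by
      ext
      rw [πinv, LinearMap.codRestrict_apply, LinearMap.codRestrict_apply]
      exact averageMap_comm ρ g v
    have h2 : ∀ w : ρ.invariants, ρ h ((T w : V)) = (T w : V) := fun w => (T w).2 h
    simp [h1, h2]⟩
  left_inv B := by
    ext v
    have h1 : ∀ w : ρ.invariants, πinv ρ (B.1 (w : V)) = ⟨B.1 (w : V), fun h => BMaps_inv B.2 h _⟩ := by
      intro w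
      exact πinv_apply_invariant ρ ⟨B.1 (w : V), fun h => BMaps_inv B.2 h _⟩
    simp only [Submodule.coe_subtype, LinearMap.coe_comp, Function.comp_apply]
    rw [h1]
    exact BMaps_avg ρ B.2 v
  right_inv T := by
    ext w
    simp [πinv_apply_invariant ρ w, πinv_apply_invariant ρ]

end Avg

section Wreath

variable (ρ : Representation ℝ G V) {k : ℕ}

/-- Index `0` of `Fin k`. -/
def fin0 (hk : 2 ≤ k) : Fin k := ⟨0, by omega⟩

/-- Index `1` of `Fin k`. -/
def fin1 (hk : 2 ≤ k) : Fin k := ⟨1, by omega⟩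

theorem fin1_ne_fin0 (hk : 2 ≤ k) : fin1 hk ≠ fin0 hk := by
  simp [fin0, fin1, Fin.ext_iff]

theorem wreath_single {L : (Fin k → V) →ₗ[ℝ] (Fin k → V)} (hL : L ∈ WreathEquivMaps ρ k)
    (τ : Equiv.Perm (Fin k)) (j m : Fin k) (w : V) :
    L (Pi.single j w) m = L (Pi.single (τ j) w) (τ m) := by
  obtain ⟨-, h2⟩ := hL
  have h := h2 τ (Pi.single j w)
  have hv : (fun i => (Pi.single j w : Fin k → V) (τ⁻¹ i)) = (Pi.single (τ j) w : Fin k → V) := by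
    funext i
    by_cases hij : i = τ j
    · subst hij
      rw [← Equiv.Perm.mul_apply, inv_mul_cancel, Equiv.Perm.one_apply]
      simp
    · rw [Pi.single_eq_of_ne hij, Pi.single_eq_of_ne]
      intro hc
      exact hij (by rw [← hc]; simp)
  rw [hv] at h
  have := congrFun h (τ m)
  simpa using this.symm

theorem wreath_diag (hk : 2 ≤ k) {L : (Fin k → V) →ₗ[ℝ] (Fin k → V)}
    (hL : L ∈ WreathEquivMaps ρ k) (j : Fin k) (w : V) :
    L (Pi.single j w) j = L (Pi.single (fin0 hk) w) (fin0 hk) := by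
  have h := wreath_single ρ hL (Equiv.swap j (fin0 hk)) j j w
  simpa using h

theorem wreath_off (hk : 2 ≤ k) {L : (Fin k → V) →ₗ[ℝ] (Fin k → V)}
    (hL : L ∈ WreathEquivMaps ρ k) (i j : Fin k) (hij : i ≠ j) (w : V) :
    L (Pi.single j w) i = L (Pi.single (fin0 hk) w) (fin1 hk) := by
  set i0 : Fin k := fin0 hk
  set i1 : Fin k := fin1 hk
  have h01 : i1 ≠ i0 := fin1_ne_fin0 hk
  set a : Fin k := Equiv.swap j i0 i with ha
  have hji : Equiv.swap j i0 j = i0 := Equiv.swap_apply_left j i0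
  have hai0 : a ≠ i0 := fun hc => hij ((Equiv.swap j i0).injective (hc.trans hji.symm))
  set τ : Equiv.Perm (Fin k) := (Equiv.swap a i1) * (Equiv.swap j i0) with hτ
  have hτj : τ j = i0 := by
    simp [hτ, Equiv.Perm.mul_apply, hji, Equiv.swap_apply_of_ne_of_ne hai0.symm h01.symm]
  have hτi : τ i = i1 := by
    simp [hτ, Equiv.Perm.mul_apply, ← ha]
  have h := wreath_single ρ hL τ j i w
  rw [hτj, hτi] at h
  exact h

theorem wreath_A_mem (hk : 2 ≤ k) {L : (Fin k → V) →ₗ[ℝ] (Fin k → V)}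
    (hL : L ∈ WreathEquivMaps ρ k) (g : G) (v : V) :
    L (Pi.single (fin0 hk) (ρ g v)) (fin0 hk) = ρ g (L (Pi.single (fin0 hk) v) (fin0 hk)) := by
  classical
  set i0 : Fin k := fin0 hk
  obtain ⟨h1, -⟩ := hL
  set gf : Fin k → G := fun i => if i = i0 then g else 1 with hgf
  have h := h1 gf (Pi.single i0 v)
  have hv : (fun i => ρ (gf i) ((Pi.single i0 v : Fin k → V) i)) =
      (Pi.single i0 (ρ g v) : Fin k → V) := by
    funext i
    by_cases hi : i = i0
    · subst hi; simp [hgf]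
    · simp [hgf, hi, Pi.single_eq_of_ne hi]
  rw [hv] at h
  have := congrFun h i0
  simpa [hgf] using this

theorem wreath_B_mem (hk : 2 ≤ k) {L : (Fin k → V) →ₗ[ℝ] (Fin k → V)}
    (hL : L ∈ WreathEquivMaps ρ k) (g h : G) (v : V) :
    L (Pi.single (fin0 hk) (ρ g v)) (fin1 hk) = ρ h (L (Pi.single (fin0 hk) v) (fin1 hk)) := by
  classical
  set i0 : Fin k := fin0 hk
  set i1 : Fin k := fin1 hk
  have h01 : i1 ≠ i0 := fin1_ne_fin0 hk
  obtain ⟨h1, -⟩ := hL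
  set gf : Fin k → G := fun i => if i = i0 then g else h with hgf
  have hh := h1 gf (Pi.single i0 v)
  have hv : (fun i => ρ (gf i) ((Pi.single i0 v : Fin k → V) i)) =
      (Pi.single i0 (ρ g v) : Fin k → V) := by
    funext i
    by_cases hi : i = i0
    · subst hi; simp [hgf]
    · simp [hgf, hi, Pi.single_eq_of_ne hi]
  rw [hv] at hh
  have := congrFun hh i1
  simpa [hgf, h01] using this

theorem wreath_apply (hk : 2 ≤ k) {L : (Fin k → V) →ₗ[ℝ] (Fin k → V)}
    (hL : L ∈ WreathEquivMaps ρ k) (v : Fin k → V) (i : Fin k) :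
    L v i = L (Pi.single (fin0 hk) (v i)) (fin0 hk)
      - L (Pi.single (fin0 hk) (v i)) (fin1 hk)
      + ∑ j : Fin k, L (Pi.single (fin0 hk) (v j)) (fin1 hk) := by
  classical
  have hv : L v i = ∑ j : Fin k, L (Pi.single j (v j)) i := by
    conv_lhs => rw [← Finset.univ_sum_single v, map_sum]
    simp [Finset.sum_apply]
  rw [hv]
  have hterm : ∀ j : Fin k, L (Pi.single j (v j)) i =
      L (Pi.single (fin0 hk) (v j)) (fin1 hk) +
        (if j = i then L (Pi.single (fin0 hk) (v i)) (fin0 hk)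
            - L (Pi.single (fin0 hk) (v i)) (fin1 hk) else 0) := by
    intro j
    by_cases hj : j = i
    · subst hj
      rw [wreath_diag ρ hk hL j (v j), if_pos rfl]
      abel
    · rw [wreath_off ρ hk hL i j (fun hc => hj hc.symm) (v j), if_neg hj]
      abel
  calc ∑ j : Fin k, L (Pi.single j (v j)) i
      = ∑ j : Fin k, (L (Pi.single (fin0 hk) (v j)) (fin1 hk) +
          (if j = i then L (Pi.single (fin0 hk) (v i)) (fin0 hk)
            - L (Pi.single (fin0 hk) (v i)) (fin1 hk) else 0)) :=
        Finset.sum_congr rfl fun j _ => hterm j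
    _ = _ := by
        rw [Finset.sum_add_distrib, Finset.sum_ite_eq' Finset.univ i]
        simp only [Finset.mem_univ, if_pos]
        abel

def mkL (A B : V →ₗ[ℝ] V) : (Fin k → V) →ₗ[ℝ] (Fin k → V) :=
  LinearMap.pi fun i => (A - B) ∘ₗ LinearMap.proj i + ∑ j : Fin k, B ∘ₗ LinearMap.proj j

theorem mkL_apply (A B : V →ₗ[ℝ] V) (v : Fin k → V) (i : Fin k) :
    mkL A B v i = A (v i) - B (v i) + ∑ j : Fin k, B (v j) := by
  simp [mkL, LinearMap.pi_apply, LinearMap.sum_apply]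

theorem mkL_mem {A B : V →ₗ[ℝ] V} (hA : A ∈ GEquivMaps ρ) (hB : B ∈ BMaps ρ) :
    mkL (k := k) A B ∈ WreathEquivMaps ρ k := by
  refine ⟨fun g v => ?_, fun τ v => ?_⟩
  · funext m
    rw [mkL_apply, mkL_apply]
    rw [hA (g m) (v m)]
    rw [map_add, map_sub, map_sum]
    rw [BMaps_factor hB (g m) (v m), BMaps_inv hB (g m) (v m)]
    congr 1
    refine Finset.sum_congr rfl fun j _ => ?_
    rw [BMaps_factor hB (g j) (v j), BMaps_inv hB (g m) (v j)]
  · funext m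
    rw [mkL_apply, mkL_apply]
    congr 1
    exact Equiv.sum_comp τ⁻¹ fun j => B (v j)

noncomputable def wreathEquiv (hk : 2 ≤ k) :
    WreathEquivMaps ρ k ≃ₗ[ℝ] (GEquivMaps ρ × BMaps ρ) where
  toFun L :=
    (⟨(LinearMap.proj (fin0 hk) : (Fin k → V) →ₗ[ℝ] V) ∘ₗ L.1 ∘ₗ LinearMap.single ℝ (fun _ => V) (fin0 hk),
      fun g v => wreath_A_mem ρ hk L.2 g v⟩,
     ⟨(LinearMap.proj (fin1 hk) : (Fin k → V) →ₗ[ℝ] V) ∘ₗ L.1 ∘ₗ LinearMap.single ℝ (fun _ => V) (fin0 hk),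
      fun g h v => wreath_B_mem ρ hk L.2 g h v⟩)
  map_add' L L' := by
    refine Prod.ext ?_ ?_ <;> · apply Subtype.ext; ext v; simp
  map_smul' c L := by
    refine Prod.ext ?_ ?_ <;> · apply Subtype.ext; ext v; simp
  invFun p := ⟨mkL p.1.1 p.2.1, mkL_mem ρ p.1.2 p.2.2⟩
  left_inv L := by
    apply Subtype.ext
    apply LinearMap.ext
    intro v
    funext i
    show mkL _ _ v i = L.1 v i
    rw [mkL_apply]
    rw [wreath_apply ρ hk L.2 v i]
    simp
  right_inv p := by
    classical
    have h01 : fin1 hk ≠ fin0 hk := fin1_ne_fin0 hk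
    have hsum : ∀ w : V, ∑ j : Fin k, p.2.1 ((Pi.single (fin0 hk) w : Fin k → V) j)
        = p.2.1 w := by
      intro w
      rw [Finset.sum_eq_single (fin0 hk)]
      · simp
      · intro j _ hj; rw [Pi.single_eq_of_ne hj]; simp
      · simp
    refine Prod.ext ?_ ?_
    · apply Subtype.ext
      apply LinearMap.ext
      intro w
      show mkL _ _ (Pi.single (fin0 hk) w) (fin0 hk) = p.1.1 w
      rw [mkL_apply, hsum]
      simp
    · apply Subtype.ext
      apply LinearMap.ext
      intro w
      show mkL _ _ (Pi.single (fin0 hk) w) (fin1 hk) = p.2.1 w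
      rw [mkL_apply, hsum, Pi.single_eq_of_ne h01]
      simp

end Wreath

/-- For a finite group `G` acting linearly on a
finite-dimensional real vector space `V` and `k ≥ 2`, the dimension of the
space of wreath-equivariant linear endomorphisms of `Vᵏ` equals
`D + s²`, where `D` is the dimension of the space of `G`-equivariant
endomorphisms of `V` and `s` is the dimension of the fixed subspace. -/
theorem finrank_wreathEquivMaps [Finite G] [FiniteDimensional ℝ V]
    (ρ : Representation ℝ G V) (k : ℕ) (hk : 2 ≤ k) :
    Module.finrank ℝ (WreathEquivMaps ρ k) =
      Module.finrank ℝ (GEquivMaps ρ) +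
        (Module.finrank ℝ ρ.invariants) ^ 2 := by
  classical
  letI : Fintype G := Fintype.ofFinite G
  have hcard : (Fintype.card G : ℝ) ≠ 0 := Nat.cast_ne_zero.2 Fintype.card_ne_zero
  letI := invertibleOfNonzero hcard
  rw [LinearEquiv.finrank_eq (wreathEquiv ρ hk), Module.finrank_prod,
    LinearEquiv.finrank_eq (bMapsEquiv ρ), Module.finrank_linearMap, sq]


end WreathDimCount
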